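/- Let ⟨B_𝒥, M⟩ be a Grothendieck matched pair of algebras and X a B_𝒥-set. Then for every m ∈ M and b ∈ B the relation ≡ᵐ_b is an equivalence relation on X, and: (i) if x ≡_b y then x ≡ᵐ_{m*b} y; (ii) if x ≡ᵐ_b y and c ≤ b then x ≡ᵐ_c y; (iii) if P ∈ 𝒥_b and x ≡ᵐ_c y for all c ∈ P, then x ≡ᵐ_b y; (iv) if x ≡ᵐ_b y then x ≡^{nm}_{n*b} y for every n ∈ M; (v) if X is moreover a ⟨B_𝒥, M⟩-set and x ≡ᵐ_b y, then m·x ≡_b m·y; (vi) if m ≡_b n in M, then for every c ≤ b and all x, y ∈ X: x ≡ᵐ_c y if and only if x ≡ⁿ_c y. -/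

import Mathlib

/-- `P` is a partition of `b`: a set of pairwise-disjoint nonzero elements with
supremum `b`. -/
def IsPartitionOf {B : Type*} [BooleanAlgebra B] (P : Set B) (b : B) : Prop :=
  (⊥ : B) ∉ P ∧ (∀ c ∈ P, ∀ d ∈ P, c ≠ d → c ⊓ d = ⊥) ∧ IsLUB P b

/-- A zero-dimensional topology on a Boolean algebra `B`: a set `J` of partitions of `⊤`
containing every finite partition of `⊤`, closed under refinement, and closed under
taking joins over the blocks of any partition of a member. -/
structure ZeroDimTopology (B : Type*) [BooleanAlgebra B] where
  J : Set (Set B)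
  partitionOf_mem : ∀ P ∈ J, IsPartitionOf P (⊤ : B)
  finite_mem : ∀ P : Set B, P.Finite → IsPartitionOf P (⊤ : B) → P ∈ J
  refine_mem : ∀ P ∈ J, ∀ Q : B → Set B, (∀ b ∈ P, Q b ∈ J) →
    {x : B | x ≠ ⊥ ∧ ∃ b ∈ P, ∃ c ∈ Q b, x = b ⊓ c} ∈ J
  quot_mem : ∀ P ∈ J, ∀ S : Set (Set B),
    (∀ T ∈ S, T.Nonempty ∧ T ⊆ P) →
    (∀ T ∈ S, ∀ T' ∈ S, T ≠ T' → T ∩ T' = ∅) →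
    ⋃₀ S = P →
    (∀ T ∈ S, ∃ x : B, IsLUB T x) ∧ {x : B | ∃ T ∈ S, IsLUB T x} ∈ J

/-- `P ∈ 𝒥_b`: `P` is a partition of `b` contained in some member of `𝒥`. -/
def MemJAt {B : Type*} [BooleanAlgebra B] (Z : ZeroDimTopology B) (P : Set B) (b : B) :
    Prop :=
  IsPartitionOf P b ∧ ∃ Q ∈ Z.J, P ⊆ Q

/-- A `B_𝒥`-set: a set `X` with equivalence relations `≡_b` (`b ∈ B`) satisfying the
`B_𝒥`-set axioms. -/
structure BJSet {B : Type*} [BooleanAlgebra B] (Z : ZeroDimTopology B) (X : Type*) where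
  rel : B → X → X → Prop
  equiv : ∀ b : B, Equivalence (rel b)
  mono : ∀ (b c : B) (x y : X), c ≤ b → rel b x y → rel c x y
  rel_top : ∀ x y : X, rel ⊤ x y ↔ x = y
  rel_bot : ∀ x y : X, rel ⊥ x y
  glue : ∀ (b : B) (P : Set B), MemJAt Z P b →
    ∀ x y : X, (∀ c ∈ P, rel c x y) → rel b x y
  patch : ∀ P ∈ Z.J, ∀ xs : B → X, ∃ z : X, ∀ b ∈ P, rel b z (xs b)

/-- A `𝒥`-closed ideal of `B`: an ideal containing `b` whenever it contains some
`P ∈ 𝒥_b`. -/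
def IsJClosedIdeal {B : Type*} [BooleanAlgebra B] (Z : ZeroDimTopology B) (I : Set B) :
    Prop :=
  (⊥ : B) ∈ I ∧ (∀ b c : B, b ≤ c → c ∈ I → b ∈ I) ∧
    (∀ b c : B, b ∈ I → c ∈ I → b ⊔ c ∈ I) ∧
    ∀ (b : B) (P : Set B), MemJAt Z P b → P ⊆ I → b ∈ I

/-- A Grothendieck matched pair of algebras `⟨B_𝒥, M⟩`: a `B_𝒥`-set structure on the
monoid `M` together with an action of `M` on `B` by Grothendieck Boolean homomorphisms,
satisfying the matched pair axioms. -/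
structure MatchedPair {B : Type*} [BooleanAlgebra B] (Z : ZeroDimTopology B)
    (M : Type*) [Monoid M] extends BJSet Z M where
  act : M → B → B
  act_inf : ∀ (m : M) (b c : B), act m (b ⊓ c) = act m b ⊓ act m c
  act_sup : ∀ (m : M) (b c : B), act m (b ⊔ c) = act m b ⊔ act m c
  act_compl : ∀ (m : M) (b : B), act m bᶜ = (act m b)ᶜ
  act_top : ∀ m : M, act m ⊤ = ⊤
  act_bot : ∀ m : M, act m ⊥ = ⊥
  act_J : ∀ m : M, ∀ P ∈ Z.J, {x : B | x ≠ ⊥ ∧ ∃ c ∈ P, x = act m c} ∈ Z.J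
  act_one : ∀ b : B, act 1 b = b
  act_mul : ∀ (m n : M) (b : B), act (m * n) b = act m (act n b)
  rel_mul_right : ∀ (b : B) (m n p : M), rel b m n → rel b (m * p) (n * p)
  rel_mul_left : ∀ (b : B) (m n p : M), rel b n p → rel (act m b) (m * n) (m * p)
  rel_act : ∀ (b c : B) (m n : M), rel b m n → b ⊓ act m c = b ⊓ act n c

/-- `x ≡ᵐ_b y`: `b` belongs to the smallest `𝒥`-closed ideal of `B` containing all `m*c`
for `c` with `x ≡_c y`. -/
def relM {B : Type*} [BooleanAlgebra B] {Z : ZeroDimTopology B} {M : Type*} [Monoid M]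
    {X : Type*} (MP : MatchedPair Z M) (S : BJSet Z X) (m : M) (b : B) (x y : X) : Prop :=
  ∀ I : Set B, IsJClosedIdeal Z I → (∀ c : B, S.rel c x y → MP.act m c ∈ I) → b ∈ I


section Helpers
variable {B : Type*} [BooleanAlgebra B]

lemma ubDiffBot (A : Set B) : upperBounds (A \ {⊥}) = upperBounds A := by
  ext w
  constructor
  · intro hw a ha
    by_cases h : a = (⊥ : B)
    · simp [h]
    · exact hw ⟨ha, h⟩
  · intro hw a ha
    exact hw ha.1

lemma isLUB_diffBot {A : Set B} {s : B} (h : IsLUB A s) : IsLUB (A \ {⊥}) s :=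
  ⟨fun a ha => h.1 ha.1, by rw [ubDiffBot]; exact h.2⟩

lemma le_iff_inf_compl {a b : B} : a ≤ b ↔ a ⊓ bᶜ = ⊥ := by
  rw [← sdiff_eq, sdiff_eq_bot_iff]

lemma exists_meet {T : Set B} {t v : B} (h : IsLUB T t) (hv : v ⊓ t ≠ ⊥) :
    ∃ s ∈ T, v ⊓ s ≠ ⊥ := by
  by_contra hc
  push_neg at hc
  apply hv
  have ht : t ≤ vᶜ := by
    apply h.2
    intro s hs
    rw [le_iff_inf_compl, compl_compl, inf_comm]
    exact hc s hs
  rw [inf_comm]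
  rw [le_iff_inf_compl] at ht
  simpa using ht

lemma isLUB_inf {P : Set B} {b : B} (a : B) (h : IsLUB P b) :
    IsLUB {x | ∃ c ∈ P, x = a ⊓ c} (a ⊓ b) := by
  constructor
  · rintro x ⟨c, hc, rfl⟩
    exact inf_le_inf_left a (h.1 hc)
  · intro u hu
    have hb : b ≤ aᶜ ⊔ u := by
      apply h.2
      intro c hc
      have h1 : a ⊓ c ≤ u := hu ⟨c, hc, rfl⟩
      have : c \ aᶜ ≤ u := by rwa [sdiff_eq, compl_compl, inf_comm]
      exact sdiff_le_iff.1 this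
    calc a ⊓ b ≤ a ⊓ (aᶜ ⊔ u) := inf_le_inf_left a hb
      _ = (a ⊓ aᶜ) ⊔ (a ⊓ u) := inf_sup_left _ _ _
      _ ≤ u := by simp

lemma pair_mem_J (Z : ZeroDimTopology B) {a : B} (ha : a ≠ ⊥) (ha' : a ≠ ⊤) :
    ({a, aᶜ} : Set B) ∈ Z.J := by
  apply Z.finite_mem _ (Set.toFinite _)
  refine ⟨?_, ?_, ?_⟩
  · intro h
    rcases h with h | h
    · exact ha h.symm
    · exact ha' (by simpa using h.symm)
  · intro c hc d hd hcd
    rcases hc with rfl | rfl <;> rcases hd with rfl | rfl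
    · exact absurd rfl hcd
    · exact inf_compl_eq_bot
    · exact compl_inf_eq_bot
    · exact absurd rfl hcd
  · refine ⟨fun x _ => le_top, fun w hw => ?_⟩
    have h1 : a ≤ w := hw (by simp)
    have h2 : aᶜ ≤ w := hw (by simp)
    calc (⊤ : B) = a ⊔ aᶜ := sup_compl_eq_top.symm
      _ ≤ w := sup_le h1 h2

end Helpers
section Ideals
variable {B : Type*} [BooleanAlgebra B] {Z : ZeroDimTopology B}

lemma inf_ideal {I : Set B} (hI : IsJClosedIdeal Z I) (a : B) :
    IsJClosedIdeal Z {d | a ⊓ d ∈ I} := by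
  obtain ⟨hbot, hdown, hsup, hclose⟩ := hI
  refine ⟨by simpa using hbot, ?_, ?_, ?_⟩
  · intro b c hbc hc
    exact hdown _ _ (inf_le_inf_left a hbc) hc
  · intro b c hb hc
    simpa [inf_sup_left] using hsup _ _ hb hc
  · intro b P hP hPI
    by_cases ha : a = ⊥
    · simpa [ha] using hbot
    by_cases ha' : a = ⊤
    · subst ha'
      simp only [Set.mem_setOf_eq, top_inf_eq] at *
      exact hclose b P hP (fun c hc => by simpa using hPI hc)
    obtain ⟨⟨hPb, hPd, hPl⟩, Q, hQJ, hPQ⟩ := hP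
    have hmem : MemJAt Z {x | x ≠ ⊥ ∧ ∃ c ∈ P, x = a ⊓ c} (a ⊓ b) := by
      refine ⟨⟨?_, ?_, ?_⟩, ?_⟩
      · intro h; exact h.1 rfl
      · rintro x ⟨hx, c, hc, rfl⟩ y ⟨hy, d, hd, rfl⟩ hxy
        have hcd : c ≠ d := by rintro rfl; exact hxy rfl
        rw [inf_inf_inf_comm, hPd c hc d hd hcd, inf_bot_eq]
      · have h1 := isLUB_inf a hPl
        have h2 : {x | x ≠ ⊥ ∧ ∃ c ∈ P, x = a ⊓ c}
            = {x | ∃ c ∈ P, x = a ⊓ c} \ {⊥} := by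
          ext x; simp [and_comm]
        rw [h2]
        exact isLUB_diffBot h1
      · refine ⟨_, Z.refine_mem Q hQJ (fun _ => {a, aᶜ})
          (fun _ _ => pair_mem_J Z ha ha'), ?_⟩
        rintro x ⟨hx, c, hc, rfl⟩
        exact ⟨hx, c, hPQ hc, a, Or.inl rfl, inf_comm a c⟩
    apply hclose _ _ hmem
    rintro x ⟨hx, c, hc, rfl⟩
    exact hPI hc

lemma act_mono {M : Type*} [Monoid M] (MP : MatchedPair Z M) (n : M) {c b : B}
    (h : c ≤ b) : MP.act n c ≤ MP.act n b := by
  have : MP.act n c ⊓ MP.act n b = MP.act n c := by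
    rw [← MP.act_inf, inf_eq_left.2 h]
  exact inf_eq_left.1 this

lemma act_image_memJAt {M : Type*} [Monoid M] (MP : MatchedPair Z M) (n : M)
    {P : Set B} {b : B} (hP : MemJAt Z P b) :
    MemJAt Z {x | x ≠ ⊥ ∧ ∃ c ∈ P, x = MP.act n c} (MP.act n b) := by
  obtain ⟨⟨hPb, hPd, hPl⟩, Q, hQJ, hPQ⟩ := hP
  have hQ : IsPartitionOf Q ⊤ := Z.partitionOf_mem Q hQJ
  have hQ'J : {x : B | x ≠ ⊥ ∧ ∃ c ∈ Q, x = MP.act n c} ∈ Z.J := MP.act_J n Q hQJ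
  have hQ' : IsPartitionOf {x : B | x ≠ ⊥ ∧ ∃ c ∈ Q, x = MP.act n c} ⊤ :=
    Z.partitionOf_mem _ hQ'J
  refine ⟨⟨?_, ?_, ?_, ?_⟩, _, hQ'J, ?_⟩
  · intro h; exact h.1 rfl
  · rintro x ⟨hx, c, hc, rfl⟩ y ⟨hy, d, hd, rfl⟩ hxy
    have hcd : c ≠ d := by rintro rfl; exact hxy rfl
    rw [← MP.act_inf, hPd c hc d hd hcd, MP.act_bot]
  · -- IsLUB
    rintro x ⟨hx, c, hc, rfl⟩
    exact act_mono MP n (hPl.1 hc)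
  · intro u hu
    by_contra hle
    have hv : MP.act n b ⊓ uᶜ ≠ ⊥ := fun h => hle (le_iff_inf_compl.2 h)
    have hv' : (MP.act n b ⊓ uᶜ) ⊓ (⊤ : B) ≠ ⊥ := by simpa using hv
    obtain ⟨s, hs, hvs⟩ := exists_meet hQ'.2.2 hv'
    obtain ⟨hs0, q, hq, rfl⟩ := hs
    have hbq : b ⊓ q ≠ ⊥ := by
      intro h
      apply hvs
      have h1 : MP.act n b ⊓ uᶜ ⊓ MP.act n q ≤ MP.act n b ⊓ MP.act n q :=
        inf_le_inf_right _ inf_le_left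
      rw [← MP.act_inf, h, MP.act_bot] at h1
      exact le_bot_iff.1 h1
    have hqP : q ∈ P := by
      by_contra hq'
      apply hbq
      have : b ≤ qᶜ := by
        apply hPl.2
        intro p hp
        have hpq : p ≠ q := fun h => hq' (h ▸ hp)
        rw [le_iff_inf_compl, compl_compl]
        exact hQ.2.1 p (hPQ hp) q hq hpq
      rw [le_iff_inf_compl, compl_compl] at this
      exact this
    have hsu : MP.act n q ≤ u := hu ⟨hs0, q, hqP, rfl⟩
    apply hvs
    have : MP.act n b ⊓ uᶜ ⊓ MP.act n q ≤ uᶜ ⊓ u :=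
      le_inf (le_trans inf_le_left inf_le_right) (le_trans inf_le_right hsu)
    rw [compl_inf_eq_bot] at this
    exact le_bot_iff.1 this
  · rintro x ⟨hx, c, hc, rfl⟩
    exact ⟨hx, c, hPQ hc, rfl⟩

lemma act_ideal {I : Set B} (hI : IsJClosedIdeal Z I) {M : Type*} [Monoid M]
    (MP : MatchedPair Z M) (n : M) : IsJClosedIdeal Z {d | MP.act n d ∈ I} := by
  obtain ⟨hbot, hdown, hsup, hclose⟩ := hI
  refine ⟨by simpa [MP.act_bot] using hbot, ?_, ?_, ?_⟩
  · intro b c hbc hc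
    exact hdown _ _ (act_mono MP n hbc) hc
  · intro b c hb hc
    simpa [MP.act_sup] using hsup _ _ hb hc
  · intro b P hP hPI
    apply hclose _ _ (act_image_memJAt MP n hP)
    rintro x ⟨hx, c, hc, rfl⟩
    exact hPI hc

end Ideals
section RelSup
variable {B : Type*} [BooleanAlgebra B] {Z : ZeroDimTopology B} {X : Type*}

lemma rel_sup (S : BJSet Z X) (u v : B) (x y : X) (hu : S.rel u x y)
    (hv : S.rel v x y) : S.rel (u ⊔ v) x y := by
  have hdisj : ∀ c ∈ ({u, v ⊓ uᶜ, uᶜ ⊓ vᶜ} : Set B), ∀ d ∈ ({u, v ⊓ uᶜ, uᶜ ⊓ vᶜ} : Set B),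
      c ≠ d → c ⊓ d = ⊥ := by
    intro c hc d hd hcd
    have key : ∀ a b : B, a ⊓ (b ⊓ aᶜ) = ⊥ := fun a b =>
      le_bot_iff.1 (by calc a ⊓ (b ⊓ aᶜ) ≤ a ⊓ aᶜ := inf_le_inf_left a inf_le_right
        _ = ⊥ := inf_compl_eq_bot)
    have key2 : u ⊓ (uᶜ ⊓ vᶜ) = ⊥ := le_bot_iff.1 (by
      calc u ⊓ (uᶜ ⊓ vᶜ) ≤ u ⊓ uᶜ := inf_le_inf_left u inf_le_left
        _ = ⊥ := inf_compl_eq_bot)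
    have key3 : (v ⊓ uᶜ) ⊓ (uᶜ ⊓ vᶜ) = ⊥ := le_bot_iff.1 (by
      calc (v ⊓ uᶜ) ⊓ (uᶜ ⊓ vᶜ) ≤ v ⊓ vᶜ :=
          le_inf (le_trans inf_le_left inf_le_left) (le_trans inf_le_right inf_le_right)
        _ = ⊥ := inf_compl_eq_bot)
    rcases hc with hc | hc | hc <;> rcases hd with hd | hd | hd
    · exact absurd (hc.trans hd.symm) hcd
    · rw [hc, hd]; exact key u v
    · rw [hc, hd]; exact key2
    · rw [hc, hd, inf_comm]; exact key u v
    · exact absurd (hc.trans hd.symm) hcd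
    · rw [hc, hd]; exact key3
    · rw [hc, hd, inf_comm]; exact key2
    · rw [hc, hd, inf_comm]; exact key3
    · exact absurd (hc.trans hd.symm) hcd
  have hP0 : ({u, v ⊓ uᶜ, uᶜ ⊓ vᶜ} : Set B) \ {⊥} ∈ Z.J := by
    apply Z.finite_mem _ ((Set.toFinite _).diff)
    refine ⟨by simp, ?_, ?_⟩
    · intro c hc d hd hcd
      exact hdisj c hc.1 d hd.1 hcd
    · apply isLUB_diffBot
      refine ⟨fun z _ => le_top, fun w hw => ?_⟩
      have h1 : u ≤ w := hw (by simp)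
      have h2 : v ⊓ uᶜ ≤ w := hw (by simp)
      have h3 : uᶜ ⊓ vᶜ ≤ w := hw (by simp)
      have : (⊤ : B) = u ⊔ ((v ⊓ uᶜ) ⊔ (uᶜ ⊓ vᶜ)) := by
        rw [inf_comm v uᶜ, ← inf_sup_left, sup_compl_eq_top, inf_top_eq,
          sup_compl_eq_top]
      rw [this]
      exact sup_le h1 (sup_le h2 h3)
  have hmem : MemJAt Z (({u, v ⊓ uᶜ} : Set B) \ {⊥}) (u ⊔ v) := by
    refine ⟨⟨by simp, ?_, ?_⟩, _, hP0, ?_⟩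
    · intro c hc d hd hcd
      have sub : ({u, v ⊓ uᶜ} : Set B) ⊆ {u, v ⊓ uᶜ, uᶜ ⊓ vᶜ} := by
        intro z hz; rcases hz with rfl | rfl
        · exact Or.inl rfl
        · exact Or.inr (Or.inl rfl)
      exact hdisj c (sub hc.1) d (sub hd.1) hcd
    · apply isLUB_diffBot
      refine ⟨?_, fun w hw => ?_⟩
      · rintro z (rfl | rfl)
        · exact le_sup_left
        · exact le_trans inf_le_left le_sup_right
      · have h1 : u ≤ w := hw (by simp)
        have h2 : v ⊓ uᶜ ≤ w := hw (by simp)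
        have : u ⊔ v = u ⊔ (v ⊓ uᶜ) := by
          rw [sup_inf_left, sup_compl_eq_top, inf_top_eq]
        rw [this]
        exact sup_le h1 h2
    · apply Set.diff_subset_diff_left
      intro z hz; rcases hz with rfl | rfl
      · exact Or.inl rfl
      · exact Or.inr (Or.inl rfl)
  apply S.glue _ _ hmem
  rintro c ⟨hc, hc0⟩
  rcases hc with rfl | rfl
  · exact hu
  · exact S.mono v _ x y inf_le_left hv

end RelSup

/-- For a Grothendieck matched pair `⟨B_𝒥, M⟩` and a `B_𝒥`-set `X`, the relations `≡ᵐ_b`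
are equivalence relations and satisfy properties (i)–(vi) of Lemma 12. -/
theorem stmt_19 {B : Type*} [BooleanAlgebra B] (hB : (⊥ : B) ≠ ⊤)
    {Z : ZeroDimTopology B} {M : Type*} [Monoid M] (MP : MatchedPair Z M)
    {X : Type*} (S : BJSet Z X) :
    (∀ (m : M) (b : B), Equivalence (fun x y : X => relM MP S m b x y)) ∧
    -- (i)
    (∀ (m : M) (b : B) (x y : X), S.rel b x y → relM MP S m (MP.act m b) x y) ∧
    -- (ii)
    (∀ (m : M) (b c : B) (x y : X), c ≤ b → relM MP S m b x y → relM MP S m c x y) ∧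
    -- (iii)
    (∀ (m : M) (b : B) (P : Set B), MemJAt Z P b →
      ∀ x y : X, (∀ c ∈ P, relM MP S m c x y) → relM MP S m b x y) ∧
    -- (iv)
    (∀ (m n : M) (b : B) (x y : X),
      relM MP S m b x y → relM MP S (n * m) (MP.act n b) x y) ∧
    -- (v): if `X` is moreover a `⟨B_𝒥, M⟩`-set
    (∀ smul : M → X → X,
      (∀ x : X, smul 1 x = x) →
      (∀ (m n : M) (x : X), smul (m * n) x = smul m (smul n x)) →
      (∀ (m n : M) (b : B) (x : X), MP.rel b m n → S.rel b (smul m x) (smul n x)) →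
      (∀ (m : M) (b : B) (x y : X), S.rel b x y → S.rel (MP.act m b) (smul m x) (smul m y)) →
      ∀ (m : M) (b : B) (x y : X), relM MP S m b x y → S.rel b (smul m x) (smul m y)) ∧
    -- (vi)
    (∀ (m n : M) (b : B), MP.rel b m n →
      ∀ c : B, c ≤ b → ∀ x y : X, relM MP S m c x y ↔ relM MP S n c x y) := by
  have key_vi : ∀ (m n : M) (b : B), MP.rel b m n →
      ∀ c : B, c ≤ b → ∀ x y : X, relM MP S m c x y → relM MP S n c x y := by
    intro m n b hmn c hcb x y h I hI hgen
    have hIb : IsJClosedIdeal Z {d | b ⊓ d ∈ I} := inf_ideal hI b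
    have hc : c ∈ {d | b ⊓ d ∈ I} := by
      apply h _ hIb
      intro e he
      show b ⊓ MP.act m e ∈ I
      rw [MP.rel_act b e m n hmn]
      exact hI.2.1 _ _ inf_le_right (hgen e he)
    have : b ⊓ c = c := inf_eq_right.2 hcb
    rwa [Set.mem_setOf_eq, this] at hc
  refine ⟨?_, ?_, ?_, ?_, ?_, ?_, ?_⟩
  · -- equivalence
    intro m b
    constructor
    · intro x I hI hgen
      have : MP.act m ⊤ ∈ I := hgen ⊤ ((S.rel_top x x).2 rfl)
      rw [MP.act_top] at this
      exact hI.2.1 b ⊤ le_top this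
    · intro x y h I hI hgen
      exact h I hI fun c hc => hgen c ((S.equiv c).symm hc)
    · intro x y z hxy hyz I hI hgen
      have hI1 : IsJClosedIdeal Z {u | ∀ d : B, S.rel d y z → u ⊓ MP.act m d ∈ I} := by
        refine ⟨fun d _ => by simpa using hI.1, ?_, ?_, ?_⟩
        · intro u u' huu' hu' d hd
          exact hI.2.1 _ _ (inf_le_inf_right _ huu') (hu' d hd)
        · intro u u' hu hu' d hd
          have := hI.2.2.1 _ _ (hu d hd) (hu' d hd)
          rwa [← inf_sup_right] at this
        · intro u P hP hPI d hd
          have hmd : IsJClosedIdeal Z {e | MP.act m d ⊓ e ∈ I} := inf_ideal hI _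
          have : u ∈ {e | MP.act m d ⊓ e ∈ I} := by
            apply hmd.2.2.2 u P hP
            intro p hp
            show MP.act m d ⊓ p ∈ I
            rw [inf_comm]
            exact hPI hp d hd
          rwa [Set.mem_setOf_eq, inf_comm] at this
      have hb1 : ∀ d : B, S.rel d y z → b ⊓ MP.act m d ∈ I := by
        apply hxy _ hI1
        intro c hc d hd
        have hxz : S.rel (c ⊓ d) x z :=
          (S.equiv _).trans (S.mono c _ x y inf_le_left hc)
            (S.mono d _ y z inf_le_right hd)
        have := hgen _ hxz
        rwa [MP.act_inf] at this
      have hIb : IsJClosedIdeal Z {u | b ⊓ u ∈ I} := inf_ideal hI b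
      have : b ∈ {u | b ⊓ u ∈ I} := hyz _ hIb fun d hd => hb1 d hd
      rwa [Set.mem_setOf_eq, inf_idem] at this
  · -- (i)
    intro m b x y h I hI hgen
    exact hgen b h
  · -- (ii)
    intro m b c x y hcb h I hI hgen
    exact hI.2.1 c b hcb (h I hI hgen)
  · -- (iii)
    intro m b P hP x y h I hI hgen
    exact hI.2.2.2 b P hP fun c hc => h c hc I hI hgen
  · -- (iv)
    intro m n b x y h I hI hgen
    have hIn : IsJClosedIdeal Z {d | MP.act n d ∈ I} := act_ideal hI MP n
    have : b ∈ {d | MP.act n d ∈ I} := by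
      apply h _ hIn
      intro c hc
      show MP.act n (MP.act m c) ∈ I
      rw [← MP.act_mul]
      exact hgen c hc
    exact this
  · -- (v)
    intro smul _ _ _ hsc m b x y h
    have hI : IsJClosedIdeal Z {d | S.rel d (smul m x) (smul m y)} := by
      refine ⟨S.rel_bot _ _, ?_, ?_, ?_⟩
      · intro u u' huu' hu'
        exact S.mono u' u _ _ huu' hu'
      · intro u u' hu hu'
        exact rel_sup S u u' _ _ hu hu'
      · intro u P hP hPI
        exact S.glue u P hP _ _ fun c hc => hPI hc
    exact h _ hI fun c hc => hsc m c x y hc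
  · -- (vi)
    intro m n b hmn c hcb x y
    exact ⟨key_vi m n b hmn c hcb x y,
      key_vi n m b ((MP.equiv b).symm hmn) c hcb x y⟩
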